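/- The sinc kernel decomposes over its orthonormal eigenfunctions {sinc(· − n) : n ∈ ℤ}: for all x, x' ∈ ℝ, the family n ↦ sinc(x − n)·sinc(x' − n) indexed by n ∈ ℤ is summable and ∑_{n∈ℤ} sinc(x − n)·sinc(x' − n) = sinc(x − x'). -/

import Mathlib

open Complex MeasureTheory AddCircle
open scoped Real

/-- The sinc function: `sinc 0 = 1`, `sinc t = sin (π t) / (π t)` otherwise. -/
noncomputable def sinc (t : ℝ) : ℝ :=
  if t = 0 then 1 else Real.sin (Real.pi * t) / (Real.pi * t)

lemma sinc_neg (t : ℝ) : sinc (-t) = sinc t := by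
  unfold sinc
  rcases eq_or_ne t 0 with h | h
  · simp [h]
  · rw [if_neg (neg_ne_zero.mpr h), if_neg h, mul_neg, Real.sin_neg, neg_div_neg_eq]

local instance fact01 : Fact ((0:ℝ) < 1) := ⟨one_pos⟩

/-- The helper function `t ↦ e^{2πiyt}` on the circle, via the representative in `Ioc 0 1`. -/
noncomputable def circExp (y : ℝ) : AddCircle (1:ℝ) → ℂ :=
  AddCircle.liftIoc 1 0 (fun s => Complex.exp ((2 * π * y * s : ℝ) * I))

lemma circExp_apply (y : ℝ) (t : AddCircle (1:ℝ)) :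
    circExp y t = Complex.exp ((2 * π * y * ((equivIoc 1 0 t : ℝ)) : ℝ) * I) := rfl

lemma measurable_circExp (y : ℝ) : Measurable (circExp y) := by
  have h : circExp y = (fun s : ℝ => Complex.exp ((2 * π * y * s : ℝ) * I)) ∘
      (fun t : AddCircle (1:ℝ) => ((measurableEquivIoc 1 0 t : ℝ))) := rfl
  rw [h]
  exact (Complex.measurable_exp.comp (by fun_prop)).comp
    (measurable_subtype_coe.comp (measurableEquivIoc 1 0).measurable)

lemma norm_circExp (y : ℝ) (t : AddCircle (1:ℝ)) : ‖circExp y t‖ = 1 := by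
  rw [circExp_apply, Complex.norm_exp_ofReal_mul_I]

lemma memLp_circExp (y : ℝ) : MemLp (circExp y) 2 haarAddCircle :=
  MemLp.of_bound (measurable_circExp y).aestronglyMeasurable 1
    (Filter.Eventually.of_forall fun t => le_of_eq (norm_circExp y t))

lemma exp_two_mul_I_sub_one (θ : ℝ) :
    Complex.exp (((2*θ : ℝ) : ℂ) * I) - 1 = Complex.exp ((θ:ℝ) * I) * (2 * Real.sin θ * I) := by
  have h1 : ((2*θ:ℝ):ℂ) = 2*(θ:ℂ) := by push_cast; ring
  rw [h1, Complex.exp_mul_I, Complex.exp_mul_I, Complex.cos_two_mul, Complex.sin_two_mul]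
  have h2 := Complex.sin_sq_add_cos_sq (θ:ℂ)
  have h3 : Complex.sin (θ:ℂ) = (Real.sin θ : ℂ) := by rw [Complex.ofReal_sin]
  rw [← h3]
  linear_combination 2*h2 + (-2)*(Complex.sin (θ:ℂ))^2*Complex.I_sq

lemma fourierCoeff_circExp (y : ℝ) (n : ℤ) :
    fourierCoeff (circExp y) n
      = Complex.exp (((π * (y - n) : ℝ) : ℂ) * I) * ((sinc (y - n) : ℝ) : ℂ) := by
  rw [fourierCoeff_eq_intervalIntegral (circExp y) n 0]
  rw [show (1/(1:ℝ)) = 1 by norm_num, one_smul]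
  have key : (∫ t in (0:ℝ)..0+1, (fourier (-n) ((t : ℝ) : AddCircle (1:ℝ))) • circExp y ((t : ℝ) : AddCircle (1:ℝ)))
      = ∫ t in (0:ℝ)..1, Complex.exp ((((2*π*(y - n) : ℝ)) : ℂ) * I * t) := by
    rw [zero_add, intervalIntegral.integral_of_le zero_le_one,
      intervalIntegral.integral_of_le zero_le_one]
    refine setIntegral_congr_fun measurableSet_Ioc fun t ht => ?_
    have h1 : circExp y ((t : ℝ) : AddCircle (1:ℝ)) = Complex.exp ((2 * π * y * t : ℝ) * I) := by
      rw [circExp]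
      exact AddCircle.liftIoc_coe_apply (by rwa [zero_add])
    rw [h1, smul_eq_mul, fourier_coe_apply, ← Complex.exp_add]
    congr 1
    push_cast
    field_simp
    ring
  rw [key]
  rcases eq_or_ne (y - n) 0 with h | h
  · rw [h]
    norm_num
    simp [sinc]
  · set θ : ℝ := π * (y - n) with hθdef
    have hθ : θ ≠ 0 := mul_ne_zero Real.pi_ne_zero h
    have hθC : (θ:ℂ) ≠ 0 := Complex.ofReal_ne_zero.mpr hθ
    have h2 : (2*π*(y - n) : ℝ) = 2*θ := by rw [hθdef]; ring
    have hc : (((2*π*(y - (n:ℝ)) : ℝ)) : ℂ) * I ≠ 0 := by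
      refine mul_ne_zero (Complex.ofReal_ne_zero.mpr ?_) Complex.I_ne_zero
      rw [h2]
      exact mul_ne_zero two_ne_zero hθ
    open intervalIntegral in rw [integral_exp_mul_complex hc]
    rw [sinc, if_neg h, ← hθdef]
    rw [show (((2*π*(y - (n:ℝ)) : ℝ)) : ℂ) = ((2*θ : ℝ) : ℂ) by rw [h2]]
    norm_num
    rw [show (2*(θ:ℂ)*I) = ((2*θ:ℝ):ℂ)*I by push_cast; ring]
    rw [exp_two_mul_I_sub_one θ, ← Complex.ofReal_sin]
    rw [show ((2*θ:ℝ):ℂ) = 2*(θ:ℂ) by push_cast; ring]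
    field_simp

lemma conj_circExp_mul (x x' : ℝ) (t : AddCircle (1:ℝ)) :
    (starRingEnd ℂ) (circExp x t) * circExp x' t = circExp (x' - x) t := by
  rw [circExp_apply, circExp_apply, circExp_apply, ← Complex.exp_conj, ← Complex.exp_add]
  congr 1
  rw [map_mul, Complex.conj_ofReal, Complex.conj_I]
  push_cast
  ring

/-- **P2.** The sinc kernel decomposes over its orthonormal eigenfunctions
`{sinc (· − n) : n ∈ ℤ}`. -/
theorem sinc_kernel_eigenfunction_decomposition (x x' : ℝ) :
    Summable (fun n : ℤ => sinc (x - n) * sinc (x' - n)) ∧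
      (∑' n : ℤ, sinc (x - n) * sinc (x' - n)) = sinc (x - x') := by
  set f : Lp ℂ 2 (@haarAddCircle 1 fact01) := (memLp_circExp x).toLp (circExp x) with hf
  set g : Lp ℂ 2 (@haarAddCircle 1 fact01) := (memLp_circExp x').toLp (circExp x') with hg
  have hrf : ∀ i : ℤ, fourierBasis.repr f i = fourierCoeff (circExp x) i := by
    intro i
    rw [fourierBasis_repr]
    refine integral_congr_ae ?_
    filter_upwards [MemLp.coeFn_toLp (memLp_circExp x)] with t ht
    rw [ht]
  have hrg : ∀ i : ℤ, fourierBasis.repr g i = fourierCoeff (circExp x') i := by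
    intro i
    rw [fourierBasis_repr]
    refine integral_congr_ae ?_
    filter_upwards [MemLp.coeFn_toLp (memLp_circExp x')] with t ht
    rw [ht]
  set E : ℂ := Complex.exp (((π * (x' - x) : ℝ) : ℂ) * I) with hE
  have hEne : E ≠ 0 := Complex.exp_ne_zero _
  -- each term of the inner-product sum
  have hterm : ∀ i : ℤ,
      (inner ℂ f (fourierBasis i) : ℂ) * (inner ℂ (fourierBasis i) g : ℂ)
        = E * ((sinc (x - i) * sinc (x' - i) : ℝ) : ℂ) := by
    intro i
    rw [← inner_conj_symm, ← HilbertBasis.repr_apply_apply, ← HilbertBasis.repr_apply_apply,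
      hrf i, hrg i, fourierCoeff_circExp, fourierCoeff_circExp]
    rw [map_mul, ← Complex.exp_conj, map_mul, Complex.conj_ofReal, Complex.conj_I,
      Complex.conj_ofReal]
    rw [show Complex.exp ((((π * (x - i) : ℝ)) : ℂ) * -I) *
        ((sinc (x - i) : ℝ) : ℂ) *
        (Complex.exp ((((π * (x' - i) : ℝ)) : ℂ) * I) * ((sinc (x' - i) : ℝ) : ℂ))
      = Complex.exp ((((π * (x - i) : ℝ)) : ℂ) * -I + (((π * (x' - i) : ℝ)) : ℂ) * I)
          * (((sinc (x - i) : ℝ) : ℂ) * ((sinc (x' - i) : ℝ) : ℂ)) by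
        rw [Complex.exp_add]; ring]
    rw [hE]
    push_cast
    rw [show ((π:ℂ) * ((x:ℂ) - (i:ℂ))) * -I + ((π:ℂ) * ((x':ℂ) - (i:ℂ))) * I
        = (π:ℂ) * ((x':ℂ) - (x:ℂ)) * I by ring]
  -- the inner product of f and g
  have hfg : (inner ℂ f g : ℂ) = E * ((sinc (x' - x) : ℝ) : ℂ) := by
    rw [MeasureTheory.L2.inner_def]
    have h1 : (∫ t, (inner ℂ (f t) (g t) : ℂ) ∂haarAddCircle)
        = ∫ t, circExp (x' - x) t ∂haarAddCircle := by
      refine integral_congr_ae ?_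
      filter_upwards [MemLp.coeFn_toLp (memLp_circExp x), MemLp.coeFn_toLp (memLp_circExp x')]
        with t h1 h2
      rw [RCLike.inner_apply, h1, h2, mul_comm, conj_circExp_mul]
    rw [h1]
    have h0 : fourierCoeff (circExp (x' - x)) 0 = ∫ t, circExp (x' - x) t ∂haarAddCircle := by
      simp [fourierCoeff, fourier_zero]
    rw [← h0, fourierCoeff_circExp]
    simp only [Int.cast_zero, sub_zero, hE]
  have hsum := fourierBasis.summable_inner_mul_inner f g
  have htsum := fourierBasis.tsum_inner_mul_inner f g
  simp only [hterm] at hsum htsum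
  rw [hfg] at htsum
  have hsum' : Summable (fun n : ℤ => ((sinc (x - n) * sinc (x' - n) : ℝ) : ℂ)) :=
    (summable_mul_left_iff hEne).mp hsum
  have hsumR : Summable (fun n : ℤ => sinc (x - n) * sinc (x' - n)) :=
    Complex.summable_ofReal.mp hsum'
  refine ⟨hsumR, ?_⟩
  have htsum' : (∑' n : ℤ, ((sinc (x - n) * sinc (x' - n) : ℝ) : ℂ))
      = ((sinc (x' - x) : ℝ) : ℂ) := by
    rw [tsum_mul_left] at htsum
    exact mul_left_cancel₀ hEne htsum
  rw [← Complex.ofReal_tsum] at htsum'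
  have := Complex.ofReal_injective htsum'
  rw [this, show x' - x = -(x - x') by ring, sinc_neg]
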